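/- arXiv:2206.06015 — 3 statements merged into one kernel-verified Lean document; each statement's English description precedes it below -/
import Mathlib

section
/- Let X be a real inner product space, x_1 ∈ X, and consider sequences defined by x_{t+1/2} = x_t - γ_t g_t and x_{t+1} = x_1 - η_{t+1} Σ_{s=1}^{t} ĝ_{s+1/2} (generalized optimistic dual averaging). Then for every p ∈ X and t ≥ 1 (with the convention that η_t > 0 for all t): ‖x_{t+1} - p‖²/η_{t+1} = ‖x_t - p‖²/η_t - ‖x_t - x_{t+1}‖²/η_t + (1/η_{t+1} - 1/η_t)‖x_1 - p‖² - (1/η_{t+1} - 1/η_t)‖x_1 - x_{t+1}‖² - 2⟨ĝ_{t+1/2}, x_{t+1/2} - p⟩ - 2γ_t⟨ĝ_{t+1/2}, g_t⟩ + 2⟨ĝ_{t+1/2}, x_t - x_{t+1}⟩. -/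
open InnerProductSpace Finset

/-- Energy equality for Generalized OptDA+. `gh s` denotes ĝ_{s+1/2}, `xh t` denotes x_{t+1/2}. -/
theorem generalized_OptDAplus_energy
    {X : Type*} [NormedAddCommGroup X] [InnerProductSpace ℝ X]
    (x xh g gh : ℕ → X) (γ η : ℕ → ℝ)
    (hγ : ∀ t, 0 < γ t) (hη : ∀ t, 0 < η t)
    (hext : ∀ t, xh t = x t - γ t • g t)
    (hDA : ∀ t, 1 ≤ t → x t = x 1 - η t • ∑ s ∈ Finset.Icc 1 (t - 1), gh s)
    (p : X) (t : ℕ) (ht : 1 ≤ t) :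
    ‖x (t + 1) - p‖ ^ 2 / η (t + 1)
      = ‖x t - p‖ ^ 2 / η t
        - ‖x t - x (t + 1)‖ ^ 2 / η t
        + (1 / η (t + 1) - 1 / η t) * ‖x 1 - p‖ ^ 2
        - (1 / η (t + 1) - 1 / η t) * ‖x 1 - x (t + 1)‖ ^ 2
        - 2 * ⟪gh t, xh t - p⟫_ℝ
        - 2 * γ t * ⟪gh t, g t⟫_ℝ
        + 2 * ⟪gh t, x t - x (t + 1)⟫_ℝ := by
  have hα : η t ≠ 0 := (hη t).ne'
  have hβ : η (t + 1) ≠ 0 := (hη (t + 1)).ne'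
  have h1 := hDA t ht
  have h2 := hDA (t + 1) (by omega)
  have hsum : ∑ s ∈ Finset.Icc 1 ((t + 1) - 1), gh s
      = (∑ s ∈ Finset.Icc 1 (t - 1), gh s) + gh t := by
    have hins : Finset.Icc 1 ((t + 1) - 1) = insert t (Finset.Icc 1 (t - 1)) := by
      ext s
      simp only [Finset.mem_Icc, Finset.mem_insert]
      omega
    rw [hins, Finset.sum_insert (by simp [Finset.mem_Icc]; omega)]
    abel
  have hS : ∑ s ∈ Finset.Icc 1 (t - 1), gh s = (η t)⁻¹ • (x 1 - x t) := by
    rw [eq_comm, inv_smul_eq_iff₀ hα]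
    rw [h1]; abel
  have key : gh t = (η t)⁻¹ • (x t - x 1) - (η (t + 1))⁻¹ • (x (t + 1) - x 1) := by
    have : x (t + 1) = x 1 - η (t + 1) • ((η t)⁻¹ • (x 1 - x t) + gh t) := by
      rw [h2, hsum, hS]
    have h3 : η (t + 1) • ((η t)⁻¹ • (x 1 - x t) + gh t) = x 1 - x (t + 1) := by
      rw [this]; abel
    have h4 : (η t)⁻¹ • (x 1 - x t) + gh t = (η (t+1))⁻¹ • (x 1 - x (t + 1)) := by
      rw [eq_comm, inv_smul_eq_iff₀ hβ, h3]
    have := h4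
    rw [smul_sub, smul_sub] at this ⊢
    linear_combination (norm := module) this
  rw [key, hext t]
  set_option maxRecDepth 10000 in
  simp only [norm_sub_sq_real, inner_sub_left, inner_sub_right, real_inner_smul_left,
    real_inner_smul_right, real_inner_self_eq_norm_sq, real_inner_comm]
  field_simp
  ring
end

section
/- Let T ∈ ℕ, ε > 0 and q ∈ [0,1). For any nonnegative reals a_1, …, a_T: Σ_{t=1}^T a_t / (ε + Σ_{s=1}^t a_s)^q ≤ (1/(1-q)) (Σ_{t=1}^T a_t)^{1-q}. -/
open Finset

lemma real_rpow_add_le_add_rpow {x y p : ℝ} (hx : 0 ≤ x) (hy : 0 ≤ y)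
    (hp : 0 ≤ p) (hp1 : p ≤ 1) : (x + y) ^ p ≤ x ^ p + y ^ p := by
  lift x to NNReal using hx
  lift y to NNReal using hy
  have := NNReal.rpow_add_le_add_rpow x y hp hp1
  exact_mod_cast this

lemma tangent_ineq {q : ℝ} (hq0 : 0 ≤ q) (hq1 : q < 1) {y c : ℝ}
    (hy : 0 < y) (hc : 0 ≤ c) :
    c / (y + c) ^ q ≤ ((y + c) ^ (1 - q) - y ^ (1 - q)) / (1 - q) := by
  set z := y + c with hz_def
  have hz : 0 < z := by positivity
  set p := 1 - q with hp_def
  have hp0 : 0 < p := by linarith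
  have hs : (-1 : ℝ) ≤ -c / z := by
    rw [neg_div, neg_le_neg_iff, div_le_one hz]
    linarith
  have hbern := rpow_one_add_le_one_add_mul_self hs hp0.le (by linarith : p ≤ 1)
  have h1 : (1 : ℝ) + -c / z = y / z := by
    rw [hz_def]; field_simp; ring
  rw [h1, Real.div_rpow hy.le hz.le] at hbern
  have hzp : 0 < z ^ p := Real.rpow_pos_of_pos hz p
  have hzq : 0 < z ^ q := Real.rpow_pos_of_pos hz q
  have hzz : z ^ p * z ^ q = z := by
    rw [← Real.rpow_add hz]
    norm_num [hp_def]
  have hzpz : z ^ p / z = 1 / z ^ q := by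
    rw [div_eq_div_iff hz.ne' hzq.ne', one_mul]
    exact hzz
  have e1 : z ^ p * (y ^ p / z ^ p) = y ^ p := by field_simp
  have e2 : z ^ p * (1 + p * (-c / z)) = z ^ p - p * c * (z ^ p / z) := by
    field_simp; ring
  have key : y ^ p ≤ z ^ p - p * c * (1 / z ^ q) := by
    rw [← hzpz]
    calc y ^ p = z ^ p * (y ^ p / z ^ p) := e1.symm
      _ ≤ z ^ p * (1 + p * (-c / z)) := mul_le_mul_of_nonneg_left hbern hzp.le
      _ = z ^ p - p * c * (z ^ p / z) := e2
  rw [le_div_iff₀ hp0]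
  have : c / z ^ q * p = p * c * (1 / z ^ q) := by ring
  linarith

lemma adagrad_aux (ε : ℝ) (hε : 0 < ε) (q : ℝ) (hq0 : 0 ≤ q) (hq1 : q < 1)
    (a : ℕ → ℝ) (ha : ∀ t, 0 ≤ a t) (T : ℕ) :
    ∑ t ∈ Finset.Icc 1 T, a t / (ε + ∑ s ∈ Finset.Icc 1 t, a s) ^ q
      ≤ ((ε + ∑ t ∈ Finset.Icc 1 T, a t) ^ (1 - q) - ε ^ (1 - q)) / (1 - q) := by
  induction T with
  | zero => simp
  | succ T ih =>
    have h1 : (1 : ℕ) ≤ T + 1 := by omega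
    rw [Finset.sum_Icc_succ_top h1]
    have hSnn : 0 ≤ ∑ t ∈ Finset.Icc 1 T, a t :=
      Finset.sum_nonneg fun t _ => ha t
    have hy : 0 < ε + ∑ t ∈ Finset.Icc 1 T, a t := by linarith
    have hsum : ∑ s ∈ Finset.Icc 1 (T + 1), a s
        = (∑ s ∈ Finset.Icc 1 T, a s) + a (T + 1) := Finset.sum_Icc_succ_top h1 a
    have htang := tangent_ineq hq0 hq1 hy (ha (T + 1))
    have heq : ε + ∑ s ∈ Finset.Icc 1 (T + 1), a s
        = (ε + ∑ s ∈ Finset.Icc 1 T, a s) + a (T + 1) := by rw [hsum]; ring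
    rw [heq]
    calc (∑ t ∈ Finset.Icc 1 T, a t / (ε + ∑ s ∈ Finset.Icc 1 t, a s) ^ q)
          + a (T + 1) / ((ε + ∑ s ∈ Finset.Icc 1 T, a s) + a (T + 1)) ^ q
        ≤ ((ε + ∑ t ∈ Finset.Icc 1 T, a t) ^ (1 - q) - ε ^ (1 - q)) / (1 - q)
          + (((ε + ∑ s ∈ Finset.Icc 1 T, a s) + a (T + 1)) ^ (1 - q)
              - (ε + ∑ s ∈ Finset.Icc 1 T, a s) ^ (1 - q)) / (1 - q) :=
          add_le_add ih htang
      _ = (((ε + ∑ s ∈ Finset.Icc 1 T, a s) + a (T + 1)) ^ (1 - q) - ε ^ (1 - q)) / (1 - q) := by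
          ring

/-- Generalized AdaGrad lemma. -/
theorem adagrad_lemma (T : ℕ) (ε : ℝ) (hε : 0 < ε) (q : ℝ) (hq0 : 0 ≤ q) (hq1 : q < 1)
    (a : ℕ → ℝ) (ha : ∀ t, 0 ≤ a t) :
    ∑ t ∈ Finset.Icc 1 T, a t / (ε + ∑ s ∈ Finset.Icc 1 t, a s) ^ q
      ≤ (1 / (1 - q)) * (∑ t ∈ Finset.Icc 1 T, a t) ^ (1 - q) := by
  have hS : 0 ≤ ∑ t ∈ Finset.Icc 1 T, a t := Finset.sum_nonneg fun t _ => ha t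
  have hsub := real_rpow_add_le_add_rpow hε.le hS (by linarith : (0:ℝ) ≤ 1 - q)
    (by linarith : (1:ℝ) - q ≤ 1)
  have haux := adagrad_aux ε hε q hq0 hq1 a ha T
  have hp : (0:ℝ) < 1 - q := by linarith
  calc ∑ t ∈ Finset.Icc 1 T, a t / (ε + ∑ s ∈ Finset.Icc 1 t, a s) ^ q
      ≤ ((ε + ∑ t ∈ Finset.Icc 1 T, a t) ^ (1 - q) - ε ^ (1 - q)) / (1 - q) := haux
    _ ≤ (∑ t ∈ Finset.Icc 1 T, a t) ^ (1 - q) / (1 - q) := by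
        have : (ε + ∑ t ∈ Finset.Icc 1 T, a t) ^ (1 - q) - ε ^ (1 - q)
            ≤ (∑ t ∈ Finset.Icc 1 T, a t) ^ (1 - q) := by linarith
        gcongr
    _ = (1 / (1 - q)) * (∑ t ∈ Finset.Icc 1 T, a t) ^ (1 - q) := by ring
end

section
/- Let a, b ∈ ℝ with a ≥ 0, b > 0, and let (d_t) be a nonnegative real sequence with D_{T} = Σ_{t=1}^{T} d_t. Suppose the step size satisfies 1/η_{T+1} = √(1 + R + D_{T-1}) for some R ≥ 0 and that η_t ≤ 1 for all t. Then a/η_{T+1} - b Σ_{t=1}^T d_t / η_t ≤ a√(1 + R) + a²/(4b). -/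
open Finset

/-- Cancellation lemma for the adaptive step size (Lemma adaptive-lr-cancel-out). -/
theorem adaptive_lr_cancel_out (a b : ℝ) (ha : 0 ≤ a) (hb : 0 < b)
    (d : ℕ → ℝ) (hd : ∀ t, 0 ≤ d t)
    (η : ℕ → ℝ) (hηpos : ∀ t, 0 < η t) (hηle : ∀ t, η t ≤ 1)
    (R : ℝ) (hR : 0 ≤ R) (T : ℕ)
    (hstep : 1 / η (T + 1) = Real.sqrt (1 + R + ∑ t ∈ Finset.Icc 1 (T - 1), d t)) :
    a / η (T + 1) - b * ∑ t ∈ Finset.Icc 1 T, d t / η t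
      ≤ a * Real.sqrt (1 + R) + a ^ 2 / (4 * b) := by
  set D' : ℝ := ∑ t ∈ Finset.Icc 1 (T - 1), d t with hD'
  have hD'nn : 0 ≤ D' := Finset.sum_nonneg fun t _ => hd t
  have h1R : (0:ℝ) ≤ 1 + R := by linarith
  -- sqrt subadditivity
  have hsqrt : Real.sqrt (1 + R + D') ≤ Real.sqrt (1 + R) + Real.sqrt D' := by
    have h1 := Real.sq_sqrt h1R
    have h2 := Real.sq_sqrt hD'nn
    have h3 := Real.sqrt_nonneg (1 + R)
    have h4 := Real.sqrt_nonneg D'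
    have h5 : Real.sqrt (1 + R + D') ≤ Real.sqrt ((Real.sqrt (1+R) + Real.sqrt D')^2) := by
      apply Real.sqrt_le_sqrt
      nlinarith [mul_nonneg h3 h4]
    rwa [Real.sqrt_sq (by positivity)] at h5
  -- sum bound
  have hsum : D' ≤ ∑ t ∈ Finset.Icc 1 T, d t / η t := by
    calc D' ≤ ∑ t ∈ Finset.Icc 1 T, d t := by
          apply Finset.sum_le_sum_of_subset_of_nonneg
          · apply Finset.Icc_subset_Icc_right; omega
          · intro i _ _; exact hd i
      _ ≤ ∑ t ∈ Finset.Icc 1 T, d t / η t := by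
          apply Finset.sum_le_sum
          intro i _
          rw [le_div_iff₀ (hηpos i)]
          exact mul_le_of_le_one_right (hd i) (hηle i)
  have hx := Real.sq_sqrt hD'nn
  have hxnn := Real.sqrt_nonneg D'
  have key : a * Real.sqrt D' - b * D' ≤ a ^ 2 / (4 * b) := by
    rw [le_div_iff₀ (show (0:ℝ) < 4*b by positivity)]
    nlinarith [sq_nonneg (a - 2 * b * Real.sqrt D'), hx, hb, mul_pos hb hb]
  have haeta : a / η (T + 1) = a * Real.sqrt (1 + R + D') := by
    rw [div_eq_mul_one_div, hstep]
  rw [haeta]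
  have h6 : a * Real.sqrt (1 + R + D') ≤ a * (Real.sqrt (1 + R) + Real.sqrt D') :=
    mul_le_mul_of_nonneg_left hsqrt ha
  have h7 : b * D' ≤ b * ∑ t ∈ Finset.Icc 1 T, d t / η t :=
    mul_le_mul_of_nonneg_left hsum hb.le
  linarith
end
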